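/- Let G be a group, F a finite-index normal subgroup, and H a subgroup of G such that for all g ∈ G \ H the intersection gHg⁻¹ ∩ H is finite (H is almost malnormal), with H virtually cyclic and infinite, and F free. Then F ∩ H is a maximal cyclic subgroup of F. -/

import Mathlib

/-- A group is virtually cyclic if it has a cyclic subgroup of finite index. -/
def IsVirtuallyCyclic (G : Type) [Group G] : Prop :=
  ∃ H : Subgroup G, IsCyclic H ∧ H.FiniteIndex

/-- A subgroup `H ≤ G` is almost malnormal if `gHg⁻¹ ∩ H` is finite for every `g ∉ H`. -/
def IsAlmostMalnormal {G : Type} [Group G] (H : Subgroup G) : Prop :=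
  ∀ g : G, g ∉ H → (((fun x => g * x * g⁻¹) '' (H : Set G)) ∩ (H : Set G)).Finite

/-- A subgroup is maximal cyclic if it is cyclic and not properly contained in any
cyclic subgroup. -/
def IsMaximalCyclic {G : Type} [Group G] (M : Subgroup G) : Prop :=
  (∃ g, M = Subgroup.zpowers g) ∧
    ∀ g : G, M ≤ Subgroup.zpowers g → M = Subgroup.zpowers g


open Subgroup

/-- Pigeonhole: some nonzero power of any element lies in a finite-index subgroup. -/
private lemma exists_zpow_mem_of_finiteIndex {X : Type*} [Group X] (T : Subgroup X)
    (hT : T.FiniteIndex) (y : X) : ∃ n : ℤ, n ≠ 0 ∧ y ^ n ∈ T := by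
  haveI := hT
  haveI : Finite (X ⧸ T) := Subgroup.finite_quotient_of_finiteIndex
  obtain ⟨i, j, hij, h⟩ := Finite.exists_ne_map_eq_of_infinite
    (fun k : ℕ => (QuotientGroup.mk (y ^ (k : ℤ)) : X ⧸ T))
  refine ⟨-(i : ℤ) + j, ?_, ?_⟩
  · intro h0
    apply hij
    have : (i : ℤ) = j := by linarith [neg_add_eq_zero.mp h0]
    exact_mod_cast this
  · have := QuotientGroup.eq.mp h
    rwa [← zpow_neg, ← zpow_add] at this

/-- A free group in which every element has a nonzero power in a fixed cyclic
subgroup is cyclic. -/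
private lemma freeGroup_cyclic_of_powers {ι : Type} (c : FreeGroup ι)
    (hp : ∀ y : FreeGroup ι, ∃ n : ℤ, n ≠ 0 ∧ y ^ n ∈ Subgroup.zpowers c) :
    ∃ g : FreeGroup ι, ∀ x : FreeGroup ι, x ∈ Subgroup.zpowers g := by
  classical
  by_cases hne : ∃ i j : ι, i ≠ j
  · exfalso
    obtain ⟨i, j, hij⟩ := hne
    obtain ⟨k, hk0, hk⟩ := hp (FreeGroup.of i)
    obtain ⟨p, hp1⟩ := Subgroup.mem_zpowers_iff.mp hk
    obtain ⟨l, hl0, hl⟩ := hp (FreeGroup.of j)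
    obtain ⟨q, hq1⟩ := Subgroup.mem_zpowers_iff.mp hl
    set f : FreeGroup ι →* Multiplicative ℤ :=
      FreeGroup.lift (fun x => if x = i then Multiplicative.ofAdd (1 : ℤ) else 1) with hf
    set f' : FreeGroup ι →* Multiplicative ℤ :=
      FreeGroup.lift (fun x => if x = j then Multiplicative.ofAdd (1 : ℤ) else 1) with hf'
    have key : (FreeGroup.of i) ^ (k * q) = (FreeGroup.of j) ^ (l * p) := by
      rw [zpow_mul, ← hp1, ← zpow_mul, mul_comm, zpow_mul, hq1, ← zpow_mul, mul_comm]
    have h1 : f ((FreeGroup.of i) ^ (k * q)) = Multiplicative.ofAdd (k * q) := by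
      rw [map_zpow, hf, FreeGroup.lift_apply_of, if_pos rfl, ← ofAdd_zsmul, smul_eq_mul, mul_one]
    have h2 : f ((FreeGroup.of j) ^ (l * p)) = 1 := by
      rw [map_zpow, hf, FreeGroup.lift_apply_of, if_neg (by exact fun h => hij h.symm), one_zpow]
    rw [key, h2] at h1
    have hkq : q = 0 ∨ k = 0 := by
      have h4 := congrArg Multiplicative.toAdd h1
      simpa using h4.symm
    have hq0 : q = 0 := by
      rcases hkq with h | h
      · exact h
      · exact absurd h hk0
    rw [hq0, zpow_zero] at hq1
    have h3 : f' ((FreeGroup.of j) ^ l) = Multiplicative.ofAdd l := by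
      rw [map_zpow, hf', FreeGroup.lift_apply_of, if_pos rfl, ← ofAdd_zsmul, smul_eq_mul, mul_one]
    rw [← hq1, map_one] at h3
    have hl' : l = 0 := by
      have h5 := congrArg Multiplicative.toAdd h3
      simpa using h5.symm
    exact hl0 hl'
  · push_neg at hne
    by_cases hι : Nonempty ι
    · obtain ⟨i⟩ := hι
      refine ⟨FreeGroup.of i, fun x => ?_⟩
      induction x using FreeGroup.induction_on with
      | C1 => exact one_mem _
      | of x => rw [hne x i]; exact Subgroup.mem_zpowers _
      | inv_of x hx => exact inv_mem hx
      | mul x y hx hy => exact mul_mem hx hy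
    · refine ⟨1, fun x => ?_⟩
      have : x = 1 := by
        induction x using FreeGroup.induction_on with
        | C1 => rfl
        | of x => exact absurd ⟨x⟩ hι
        | inv_of x hx => rw [hx]; simp
        | mul x y hx hy => rw [hx, hy, one_mul]
      rw [this]; exact one_mem _

/-- A free group in which every element has a nonzero power in a fixed cyclic
subgroup is cyclic (abstract version). -/
private lemma cyclic_of_free_of_powers {X : Type} [Group X] (hfree : IsFreeGroup X)
    (c : X) (hp : ∀ y : X, ∃ n : ℤ, n ≠ 0 ∧ y ^ n ∈ Subgroup.zpowers c) :
    ∃ g : X, ∀ x : X, x ∈ Subgroup.zpowers g := by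
  obtain ⟨ι, ⟨b⟩⟩ := hfree.nonempty_basis
  set e := b.repr with he
  obtain ⟨g, hg⟩ := freeGroup_cyclic_of_powers (e c) (fun y => by
    obtain ⟨n, hn0, hn⟩ := hp (e.symm y)
    obtain ⟨t, ht⟩ := Subgroup.mem_zpowers_iff.mp hn
    refine ⟨n, hn0, Subgroup.mem_zpowers_iff.mpr ⟨t, ?_⟩⟩
    have := congrArg e ht
    rwa [map_zpow, map_zpow, MulEquiv.apply_symm_apply] at this)
  refine ⟨e.symm g, fun x => ?_⟩
  obtain ⟨n, hn⟩ := Subgroup.mem_zpowers_iff.mp (hg (e x))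
  refine Subgroup.mem_zpowers_iff.mpr ⟨n, ?_⟩
  have := congrArg e.symm hn
  rwa [map_zpow, MulEquiv.symm_apply_apply] at this

theorem inter_maximal_cyclic_of_almost_malnormal'
    {G : Type} [Group G] (F H : Subgroup G)
    (hFN : F.Normal) (hFI : F.FiniteIndex) (hFfree : IsFreeGroup F)
    (hmal : ∀ g : G, g ∉ H → (((fun x => g * x * g⁻¹) '' (H : Set G)) ∩ (H : Set G)).Finite)
    (hvc : ∃ C : Subgroup H, IsCyclic C ∧ C.FiniteIndex) (hinf : Infinite H) :
    (∃ g, (F ⊓ H).subgroupOf F = Subgroup.zpowers g) ∧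
      ∀ g : F, (F ⊓ H).subgroupOf F ≤ Subgroup.zpowers g →
        (F ⊓ H).subgroupOf F = Subgroup.zpowers g := by
  haveI := hFI
  haveI := hinf
  haveI : IsFreeGroup ↥F := hFfree
  obtain ⟨C, hCcyc, hCfi⟩ := hvc
  haveI := hCcyc
  haveI := hCfi
  obtain ⟨c, hc⟩ := IsCyclic.exists_generator (α := C)
  have hCle : C ≤ Subgroup.zpowers ((c : ↥H)) := by
    intro x hx
    obtain ⟨n, hn⟩ := Subgroup.mem_zpowers_iff.mp (hc ⟨x, hx⟩)
    have hn' := Subtype.ext_iff.mp hn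
    rw [SubgroupClass.coe_zpow] at hn'
    exact Subgroup.mem_zpowers_iff.mpr ⟨n, hn'⟩
  haveI hzfi : (Subgroup.zpowers ((c : ↥H))).FiniteIndex := Subgroup.finiteIndex_of_le hCle
  have hcord : ¬ IsOfFinOrder ((c : ↥H)) := by
    intro hfin
    have hcard : Nat.card ↥H ≠ 0 := by
      rw [← Subgroup.index_mul_card (Subgroup.zpowers ((c : ↥H))), Nat.card_zpowers]
      exact Nat.mul_ne_zero hzfi.index_ne_zero hfin.orderOf_pos.ne'
    haveI := Nat.finite_of_card_ne_zero hcard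
    exact not_finite ↥H
  set z : G := ((c : ↥H) : G) with hz
  have hzH : z ∈ H := (c : ↥H).2
  have hzord : ¬ IsOfFinOrder z := by
    rw [← orderOf_eq_zero_iff] at hcord ⊢
    rw [← hcord]
    exact orderOf_injective H.subtype Subtype.coe_injective _
  have hinj : Function.Injective fun n : ℤ => z ^ n :=
    injective_zpow_iff_not_isOfFinOrder.mpr hzord
  obtain ⟨m, hm0, hF'⟩ := exists_zpow_mem_of_finiteIndex F hFI z
  have hH' : z ^ m ∈ H := zpow_mem hzH m
  -- the distinguished nontrivial element of F ⊓ H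
  set cM : ↥((F ⊓ H).subgroupOf F) :=
    ⟨⟨z ^ m, hF'⟩, Subgroup.mem_subgroupOf.mpr (Subgroup.mem_inf.mpr ⟨hF', hH'⟩)⟩ with hcM
  have hpow : ∀ y : ↥((F ⊓ H).subgroupOf F),
      ∃ n : ℤ, n ≠ 0 ∧ y ^ n ∈ Subgroup.zpowers cM := by
    intro y
    have hyH : ((y : ↥F) : G) ∈ H := (Subgroup.mem_subgroupOf.mp y.2).2
    obtain ⟨n, hn0, hn⟩ := exists_zpow_mem_of_finiteIndex
      (Subgroup.zpowers ((c : ↥H))) hzfi ⟨_, hyH⟩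
    obtain ⟨t, ht⟩ := Subgroup.mem_zpowers_iff.mp hn
    have htG : z ^ t = ((y : ↥F) : G) ^ n := by
      have ht' := Subtype.ext_iff.mp ht
      rw [SubgroupClass.coe_zpow, SubgroupClass.coe_zpow] at ht'
      exact ht'
    refine ⟨n * m, mul_ne_zero hn0 hm0, Subgroup.mem_zpowers_iff.mpr ⟨t, ?_⟩⟩
    apply Subtype.ext; apply Subtype.ext
    push_cast
    calc (z ^ m) ^ t = (z ^ t) ^ m := by rw [← zpow_mul, ← zpow_mul, mul_comm]
      _ = (((y : ↥F) : G) ^ n) ^ m := by rw [htG]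
      _ = ((y : ↥F) : G) ^ (n * m) := by rw [← zpow_mul]
  obtain ⟨g, hg⟩ := cyclic_of_free_of_powers inferInstance cM hpow
  constructor
  · refine ⟨(g : ↥F), le_antisymm ?_ ?_⟩
    · intro x hx
      obtain ⟨n, hn⟩ := Subgroup.mem_zpowers_iff.mp (hg ⟨x, hx⟩)
      have hn' := Subtype.ext_iff.mp hn
      rw [SubgroupClass.coe_zpow] at hn'
      exact Subgroup.mem_zpowers_iff.mpr ⟨n, hn'⟩
    · intro x hx
      obtain ⟨n, hn⟩ := Subgroup.mem_zpowers_iff.mp hx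
      rw [← hn]
      exact zpow_mem g.2 n
  · intro w hw
    have hcmw : (⟨z ^ m, hF'⟩ : ↥F) ∈ Subgroup.zpowers w :=
      hw (Subgroup.mem_subgroupOf.mpr (Subgroup.mem_inf.mpr ⟨hF', hH'⟩))
    obtain ⟨n, hn⟩ := Subgroup.mem_zpowers_iff.mp hcmw
    have hnG : ((w : G)) ^ n = z ^ m := by
      have hn' := Subtype.ext_iff.mp hn
      rw [SubgroupClass.coe_zpow] at hn'
      exact hn'
    have hwH : (w : G) ∈ H := by
      by_contra hwnH
      have hfin := hmal (w : G) hwnH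
      have hinj2 : Function.Injective fun k : ℤ => (z ^ m) ^ k := by
        intro a b hab
        have h1 : z ^ (m * a) = z ^ (m * b) := by
          rw [zpow_mul, zpow_mul]; exact hab
        exact mul_left_cancel₀ hm0 (hinj h1)
      refine (Set.infinite_of_injective_forall_mem hinj2 ?_) hfin
      intro k
      refine ⟨⟨(z ^ m) ^ k, zpow_mem hH' k, ?_⟩, zpow_mem hH' k⟩
      rw [← hnG, ← zpow_mul]
      group
    apply le_antisymm hw
    intro x hx
    obtain ⟨t, ht⟩ := Subgroup.mem_zpowers_iff.mp hx
    rw [← ht]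
    refine Subgroup.mem_subgroupOf.mpr (Subgroup.mem_inf.mpr ⟨SetLike.coe_mem _, ?_⟩)
    rw [SubgroupClass.coe_zpow]
    exact zpow_mem hwH t


/-- Let `G` be a group, `F` a finite-index normal free subgroup and `H` an infinite,
virtually cyclic, almost malnormal subgroup of `G`.  Then `F ∩ H` is a maximal cyclic
subgroup of `F`. -/
theorem inter_maximal_cyclic_of_almost_malnormal
    {G : Type} [Group G] (F H : Subgroup G)
    (hFN : F.Normal) (hFI : F.FiniteIndex) (hFfree : IsFreeGroup F)
    (hmal : IsAlmostMalnormal H) (hvc : IsVirtuallyCyclic H) (hinf : Infinite H) :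
    IsMaximalCyclic ((F ⊓ H).subgroupOf F) :=
  inter_maximal_cyclic_of_almost_malnormal' F H hFN hFI hFfree hmal hvc hinf
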